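/- Let n ≥ 4 be an even integer and q a nonzero complex number. The set of critical points of W_0 in Z^n is finite and has exactly n + 2 elements (n of them in V(I_1) and 2 of them in V(I_2)). -/

import Mathlib

open Finset

/-- One-based access to the coordinates of a point `z ∈ ℂⁿ`: `zc n z j = z_j` for
`1 ≤ j ≤ n` (and `0` for out-of-range indices, which are never used). -/
noncomputable def zc (n : ℕ) (z : Fin n → ℂ) (j : ℕ) : ℂ :=
  if h : 1 ≤ j ∧ j ≤ n then z ⟨j - 1, by omega⟩ else 0

/-- The mirror Landau–Ginzburg potential of the quadric `Qⁿ`: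
`W₀(z) = q z₁² z_n/(z₁⋯z_n − 1) + z₂ + ∑_{i=2}^{n−1} z_i z_{i+1}`,
defined on `Zⁿ = {z ∈ ℂⁿ : z₁⋯z_n ≠ 1}`. -/
noncomputable def W0 (n : ℕ) (q : ℂ) (z : Fin n → ℂ) : ℂ :=
  q * (zc n z 1) ^ 2 * zc n z n / ((∏ j, z j) - 1)
    + zc n z 2 + ∑ i ∈ Finset.Icc 2 (n - 1), zc n z i * zc n z (i + 1)

/-- `z` is a critical point of `W₀` in `Zⁿ`: `z₁⋯z_n ≠ 1` and all `n` partial derivatives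
`∂W₀/∂z_j` vanish at `z`. -/
def IsCritPt (n : ℕ) (q : ℂ) (z : Fin n → ℂ) : Prop :=
  (∏ j, z j) ≠ 1 ∧
    ∀ j : Fin n, deriv (fun t => W0 n q (Function.update z j t)) (z j) = 0

/-- Membership in `V(I₁)`: `z_{2i+1} = 1` for `1 ≤ i ≤ n/2−1`, `z_{2i} = z_n` for
`1 ≤ i ≤ n/2`, `q z₁² = 1`, and `z₁ z_n^{n/2} = 2`. -/
def MemV1 (n : ℕ) (q : ℂ) (z : Fin n → ℂ) : Prop :=
  (∀ i : ℕ, 1 ≤ i → i ≤ n / 2 - 1 → zc n z (2 * i + 1) = 1) ∧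
    (∀ i : ℕ, 1 ≤ i → i ≤ n / 2 → zc n z (2 * i) = zc n z n) ∧
    q * (zc n z 1) ^ 2 = 1 ∧ zc n z 1 * (zc n z n) ^ (n / 2) = 2

/-- Membership in `V(I₂)`: `z_{2i+1} = (−1)^i` for `1 ≤ i ≤ n/2−1`, `z_{2i} = 0` for
`1 ≤ i ≤ n/2`, and `q z₁² = (−1)^{(n−2)/2}`. -/
def MemV2 (n : ℕ) (q : ℂ) (z : Fin n → ℂ) : Prop :=
  (∀ i : ℕ, 1 ≤ i → i ≤ n / 2 - 1 → zc n z (2 * i + 1) = (-1 : ℂ) ^ i) ∧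
    (∀ i : ℕ, 1 ≤ i → i ≤ n / 2 → zc n z (2 * i) = 0) ∧
    q * (zc n z 1) ^ 2 = (-1 : ℂ) ^ ((n - 2) / 2)

lemma zc_update (n : ℕ) (z : Fin n → ℂ) (j : Fin n) (t : ℂ) (m : ℕ) :
    zc n (Function.update z j t) m = if m = j.val + 1 then t else zc n z m := by
  unfold zc
  by_cases hm : m = j.val + 1
  · have hr : 1 ≤ m ∧ m ≤ n := ⟨by omega, by omega⟩
    rw [dif_pos hr, if_pos hm]
    have : (⟨m - 1, by omega⟩ : Fin n) = j := by
      ext; simp only []; omega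
    rw [this, Function.update_self]
  · rw [if_neg hm]
    by_cases hr : 1 ≤ m ∧ m ≤ n
    · rw [dif_pos hr, dif_pos hr, Function.update_of_ne]
      intro hc
      apply hm
      have := Fin.val_eq_val (⟨m - 1, by omega⟩ : Fin n) j |>.2 hc
      simp at this; omega
    · rw [dif_neg hr, dif_neg hr]

lemma prod_update (n : ℕ) (z : Fin n → ℂ) (j : Fin n) (t : ℂ) :
    (∏ i, Function.update z j t i) = t * ∏ k ∈ Finset.univ.erase j, z k := by
  rw [Finset.prod_update_of_mem (Finset.mem_univ j), Finset.sdiff_singleton_eq_erase]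

lemma deriv_ratlin (a b c Q β γ t0 : ℂ) (h : t0 * Q - 1 ≠ 0) :
    deriv (fun t => (a * t ^ 2 + b * t + c) / (t * Q - 1) + (β * t + γ)) t0
      = ((2 * a * t0 + b) * (t0 * Q - 1) - (a * t0 ^ 2 + b * t0 + c) * Q) / (t0 * Q - 1) ^ 2
        + β := by
  have h1 : HasDerivAt (fun t : ℂ => a * t ^ 2 + b * t + c) (2 * a * t0 + b) t0 := by
    have := (((hasDerivAt_pow 2 t0).const_mul a).add ((hasDerivAt_id t0).const_mul b)).add_const c
    exact this.congr_deriv (by norm_num; ring)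
  have h2 : HasDerivAt (fun t : ℂ => t * Q - 1) Q t0 := by
    simpa using (hasDerivAt_id t0).mul_const Q |>.sub_const 1
  have h4 : HasDerivAt (fun t : ℂ => β * t + γ) β t0 := by
    simpa using ((hasDerivAt_id t0).const_mul β).add_const γ
  exact ((h1.div h2 h).add h4).deriv

lemma W0_update (n : ℕ) (q : ℂ) (z : Fin n → ℂ) (j : Fin n) (t : ℂ) :
    W0 n q (Function.update z j t)
      = q * (if 1 = j.val + 1 then t else zc n z 1) ^ 2
          * (if n = j.val + 1 then t else zc n z n)
          / (t * (∏ k ∈ Finset.univ.erase j, z k) - 1)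
        + ((if 2 = j.val + 1 then t else zc n z 2)
          + ((∑ i ∈ Finset.Icc 2 (n - 1), zc n z i * zc n z (i + 1))
            + (if j.val + 1 ∈ Finset.Icc 2 (n - 1)
                then (t - zc n z (j.val + 1)) * zc n z (j.val + 2) else 0)
            + (if j.val ∈ Finset.Icc 2 (n - 1)
                then zc n z j.val * (t - zc n z (j.val + 1)) else 0))) := by
  unfold W0
  rw [prod_update, zc_update, zc_update, zc_update]
  have hsum : ∑ i ∈ Finset.Icc 2 (n - 1),
      zc n (Function.update z j t) i * zc n (Function.update z j t) (i + 1)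
    = (∑ i ∈ Finset.Icc 2 (n - 1), zc n z i * zc n z (i + 1))
      + (if j.val + 1 ∈ Finset.Icc 2 (n - 1)
          then (t - zc n z (j.val + 1)) * zc n z (j.val + 2) else 0)
      + (if j.val ∈ Finset.Icc 2 (n - 1)
          then zc n z j.val * (t - zc n z (j.val + 1)) else 0) := by
    have step : ∀ i ∈ Finset.Icc 2 (n - 1),
        zc n (Function.update z j t) i * zc n (Function.update z j t) (i + 1)
          = zc n z i * zc n z (i + 1)
            + (if i = j.val + 1 then (t - zc n z (j.val + 1)) * zc n z (i + 1) else 0)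
            + (if i = j.val then zc n z i * (t - zc n z (j.val + 1)) else 0) := by
      intro i hi
      rw [zc_update, zc_update]
      by_cases h1 : i = j.val + 1
      · have h2 : ¬ (i + 1 = j.val + 1) := by omega
        have h3 : ¬ (i = j.val) := by omega
        rw [if_pos h1, if_neg h2, if_pos h1, if_neg h3, h1]
        ring
      · by_cases h2 : i + 1 = j.val + 1
        · have h3 : i = j.val := by omega
          rw [if_neg h1, if_pos h2, if_neg h1, if_pos h3]
          have : j.val + 1 = i + 1 := h2.symm
          rw [← this]
          ring
        · have h3 : ¬ (i = j.val) := by omega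
          rw [if_neg h1, if_neg h2, if_neg h1, if_neg h3]
          ring
    rw [Finset.sum_congr rfl step]
    rw [Finset.sum_add_distrib, Finset.sum_add_distrib]
    congr 1
    · congr 1
      rw [Finset.sum_ite_eq' (Finset.Icc 2 (n-1)) (j.val + 1)
        (fun i => (t - zc n z (j.val + 1)) * zc n z (i + 1))]
    · rw [Finset.sum_ite_eq' (Finset.Icc 2 (n-1)) j.val
        (fun i => zc n z i * (t - zc n z (j.val + 1)))]
  rw [hsum]
  ring

lemma zc_eq (n : ℕ) (z : Fin n → ℂ) (k : ℕ) (h : k < n) : zc n z (k + 1) = z ⟨k, h⟩ := by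
  unfold zc
  rw [dif_pos ⟨by omega, by omega⟩]
  simp only [Nat.add_sub_cancel]

lemma zc_eq' (n : ℕ) (z : Fin n → ℂ) (m : ℕ) (h1 : 1 ≤ m) (h2 : m ≤ n) :
    zc n z m = z ⟨m - 1, by omega⟩ := by
  unfold zc
  rw [dif_pos ⟨h1, h2⟩]

noncomputable def sol1 (n : ℕ) (ε ζ : ℂ) : Fin n → ℂ :=
  fun k => if k.val = 0 then ε else if k.val % 2 = 0 then 1 else ζ

noncomputable def sol2 (n : ℕ) (ε : ℂ) : Fin n → ℂ :=
  fun k => if k.val = 0 then ε else if k.val % 2 = 0 then (-1 : ℂ) ^ (k.val / 2) else 0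

lemma prod_sol1 (n : ℕ) (hn : 2 ≤ n) (hev : Even n) (ε ζ : ℂ) :
    (∏ k, sol1 n ε ζ k) = ε * ζ ^ (n / 2) := by
  have key : ∀ m : ℕ, 1 ≤ m → (∏ i ∈ Finset.range (2 * m),
      (if i = 0 then ε else if i % 2 = 0 then 1 else ζ)) = ε * ζ ^ m := by
    intro m hm
    induction m with
    | zero => omega
    | succ m ih =>
      by_cases hm0 : m = 0
      · subst hm0
        norm_num [Finset.prod_range_succ]
      · have h2 : 2 * (m + 1) = (2 * m) + 1 + 1 := by ring
        rw [h2, Finset.prod_range_succ, Finset.prod_range_succ, ih (by omega)]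
        have e1 : ¬ (2 * m = 0) := by omega
        have e2 : 2 * m % 2 = 0 := by omega
        have e3 : ¬ (2 * m + 1 = 0) := by omega
        have e4 : ¬ ((2 * m + 1) % 2 = 0) := by omega
        rw [if_neg e1, if_pos e2, if_neg e3, if_neg e4]
        ring
  obtain ⟨m, hm⟩ := hev
  have hn2 : n = 2 * m := by omega
  calc (∏ k, sol1 n ε ζ k)
      = ∏ i ∈ Finset.range n, (if i = 0 then ε else if i % 2 = 0 then 1 else ζ) := by
        rw [← Fin.prod_univ_eq_prod_range (fun i => if i = 0 then ε else if i % 2 = 0 then 1 else ζ) n]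
        rfl
    _ = ε * ζ ^ (n / 2) := by
        have h22 : 2 * m / 2 = m := by omega
        rw [hn2, key m (by omega), h22]

lemma prod_sol2 (n : ℕ) (hn : 2 ≤ n) (ε : ℂ) : (∏ k, sol2 n ε k) = 0 := by
  apply Finset.prod_eq_zero (Finset.mem_univ (⟨1, by omega⟩ : Fin n))
  unfold sol2
  norm_num

lemma card_pow_eq (k : ℕ) (hk : k ≠ 0) (a : ℂ) (ha : a ≠ 0) :
    {x : ℂ | x ^ k = a}.Finite ∧ {x : ℂ | x ^ k = a}.ncard = k := by
  obtain ⟨ζ, hζ⟩ : ∃ ζ : ℂ, IsPrimitiveRoot ζ k :=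
    ⟨_, Complex.isPrimitiveRoot_exp k hk⟩
  have hset : {x : ℂ | x ^ k = a} = ↑(Polynomial.nthRoots k a).toFinset := by
    ext x
    simp [Polynomial.mem_nthRoots (Nat.pos_of_ne_zero hk)]
  rw [hset]
  refine ⟨Finset.finite_toSet _, ?_⟩
  rw [Set.ncard_coe_finset, Multiset.toFinset_card_of_nodup (hζ.nthRoots_nodup ha),
    hζ.card_nthRoots, if_pos]
  exact ⟨_, IsAlgClosed.exists_pow_nat_eq a (Nat.pos_of_ne_zero hk) |>.choose_spec⟩

noncomputable def coefA (n : ℕ) (q : ℂ) (z : Fin n → ℂ) (j : Fin n) : ℂ :=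
  if j.val = 0 then q * zc n z n else 0

noncomputable def coefB (n : ℕ) (q : ℂ) (z : Fin n → ℂ) (j : Fin n) : ℂ :=
  if j.val = n - 1 then q * zc n z 1 ^ 2 else 0

noncomputable def coefC (n : ℕ) (q : ℂ) (z : Fin n → ℂ) (j : Fin n) : ℂ :=
  if j.val = 0 ∨ j.val = n - 1 then 0 else q * zc n z 1 ^ 2 * zc n z n

noncomputable def coefβ (n : ℕ) (z : Fin n → ℂ) (j : Fin n) : ℂ :=
  (if j.val = 1 then 1 else 0)
    + (if j.val + 1 ∈ Finset.Icc 2 (n - 1) then zc n z (j.val + 2) else 0)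
    + (if j.val ∈ Finset.Icc 2 (n - 1) then zc n z j.val else 0)

noncomputable def gamm (n : ℕ) (z : Fin n → ℂ) (j : Fin n) : ℂ :=
  (if j.val = 1 then 0 else zc n z 2)
    + (∑ i ∈ Finset.Icc 2 (n - 1), zc n z i * zc n z (i + 1))
    - (if j.val + 1 ∈ Finset.Icc 2 (n - 1)
        then zc n z (j.val + 1) * zc n z (j.val + 2) else 0)
    - (if j.val ∈ Finset.Icc 2 (n - 1) then zc n z j.val * zc n z (j.val + 1) else 0)

lemma W0_update_fun (n : ℕ) (hn : 4 ≤ n) (q : ℂ) (z : Fin n → ℂ) (j : Fin n) :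
    (fun t => W0 n q (Function.update z j t))
      = fun t => (coefA n q z j * t ^ 2 + coefB n q z j * t + coefC n q z j)
          / (t * (∏ k ∈ Finset.univ.erase j, z k) - 1)
        + (coefβ n z j * t + gamm n z j) := by
  funext t
  rw [W0_update]
  have hjlt := j.isLt
  unfold coefA coefB coefC coefβ gamm
  by_cases hj0 : j.val = 0
  · simp only [if_pos (show (1:ℕ) = j.val + 1 from by omega),
      if_neg (show ¬(n = j.val + 1) from by omega),
      if_neg (show ¬((2:ℕ) = j.val + 1) from by omega),
      if_neg (show ¬(j.val + 1 ∈ Finset.Icc 2 (n - 1)) from by rw [Finset.mem_Icc]; omega),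
      if_neg (show ¬(j.val ∈ Finset.Icc 2 (n - 1)) from by rw [Finset.mem_Icc]; omega),
      if_pos hj0, if_neg (show ¬(j.val = n - 1) from by omega),
      if_pos (Or.inl hj0 : j.val = 0 ∨ j.val = n - 1),
      if_neg (show ¬(j.val = 1) from by omega)]
    ring
  · by_cases hj1 : j.val = 1
    · simp only [if_neg (show ¬((1:ℕ) = j.val + 1) from by omega),
        if_neg (show ¬(n = j.val + 1) from by omega),
        if_pos (show (2:ℕ) = j.val + 1 from by omega),
        if_pos (show j.val + 1 ∈ Finset.Icc 2 (n - 1) from by rw [Finset.mem_Icc]; omega),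
        if_neg (show ¬(j.val ∈ Finset.Icc 2 (n - 1)) from by rw [Finset.mem_Icc]; omega),
        if_neg hj0, if_neg (show ¬(j.val = n - 1) from by omega),
        if_neg (show ¬(j.val = 0 ∨ j.val = n - 1) from by omega),
        if_pos hj1]
      ring
    · by_cases hjn : j.val = n - 1
      · simp only [if_neg (show ¬((1:ℕ) = j.val + 1) from by omega),
          if_pos (show n = j.val + 1 from by omega),
          if_neg (show ¬((2:ℕ) = j.val + 1) from by omega),
          if_neg (show ¬(j.val + 1 ∈ Finset.Icc 2 (n - 1)) from by rw [Finset.mem_Icc]; omega),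
          if_pos (show j.val ∈ Finset.Icc 2 (n - 1) from by rw [Finset.mem_Icc]; omega),
          if_neg hj0, if_pos hjn,
          if_pos (Or.inr hjn : j.val = 0 ∨ j.val = n - 1),
          if_neg hj1]
        ring
      · simp only [if_neg (show ¬((1:ℕ) = j.val + 1) from by omega),
          if_neg (show ¬(n = j.val + 1) from by omega),
          if_neg (show ¬((2:ℕ) = j.val + 1) from by omega),
          if_pos (show j.val + 1 ∈ Finset.Icc 2 (n - 1) from by rw [Finset.mem_Icc]; omega),
          if_pos (show j.val ∈ Finset.Icc 2 (n - 1) from by rw [Finset.mem_Icc]; omega),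
          if_neg hj0, if_neg hjn,
          if_neg (show ¬(j.val = 0 ∨ j.val = n - 1) from by omega),
          if_neg hj1]
        ring

/-- The polynomial form of the critical point equations. -/
noncomputable def Eqn (n : ℕ) (q : ℂ) (z : Fin n → ℂ) (j : Fin n) : ℂ :=
  (2 * coefA n q z j * z j + coefB n q z j) * ((∏ k, z k) - 1)
    - (coefA n q z j * (z j) ^ 2 + coefB n q z j * z j + coefC n q z j)
        * (∏ k ∈ Finset.univ.erase j, z k)
    + coefβ n z j * ((∏ k, z k) - 1) ^ 2

lemma crit_iff (n : ℕ) (hn : 4 ≤ n) (q : ℂ) (z : Fin n → ℂ) :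
    IsCritPt n q z ↔ ((∏ k, z k) ≠ 1 ∧ ∀ j : Fin n, Eqn n q z j = 0) := by
  unfold IsCritPt
  apply and_congr_right
  intro hP
  have hD : ((∏ k, z k) - 1) ≠ 0 := sub_ne_zero.2 hP
  apply forall_congr'
  intro j
  have hQz : z j * (∏ k ∈ Finset.univ.erase j, z k) = ∏ k, z k :=
    Finset.mul_prod_erase Finset.univ z (Finset.mem_univ j)
  have hden : z j * (∏ k ∈ Finset.univ.erase j, z k) - 1 ≠ 0 := by
    rw [hQz]; exact hD
  rw [W0_update_fun n hn q z j, deriv_ratlin _ _ _ _ _ _ _ hden]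
  rw [hQz]
  unfold Eqn
  have hD2 : ((∏ k, z k) - 1) ^ 2 ≠ 0 := pow_ne_zero _ hD
  rw [div_add' _ _ _ hD2, div_eq_zero_iff]
  constructor
  · rintro (h | h)
    · linear_combination h
    · exact absurd h hD2
  · intro h
    left
    linear_combination h

lemma spec1 (n : ℕ) (hn : 4 ≤ n) (q : ℂ) (z : Fin n → ℂ)
    (hE : ∀ j : Fin n, Eqn n q z j = 0) :
    q * zc n z 1 * zc n z n * ((∏ k, z k) - 2) = 0 := by
  have h := hE ⟨0, by omega⟩
  unfold Eqn coefA coefB coefC coefβ at h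
  simp only [if_pos (rfl : (⟨0, by omega⟩ : Fin n).val = 0),
    if_neg (show ¬((⟨0, by omega⟩ : Fin n).val = n - 1) from by simp; omega),
    if_pos (Or.inl rfl : (⟨0, by omega⟩ : Fin n).val = 0 ∨ (⟨0, by omega⟩ : Fin n).val = n - 1),
    if_neg (show ¬((⟨0, by omega⟩ : Fin n).val = 1) from by simp),
    if_neg (show ¬((⟨0, by omega⟩ : Fin n).val + 1 ∈ Finset.Icc 2 (n - 1)) from by
      rw [Finset.mem_Icc]; simp),
    if_neg (show ¬((⟨0, by omega⟩ : Fin n).val ∈ Finset.Icc 2 (n - 1)) from by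
      rw [Finset.mem_Icc]; simp)] at h
  have hmul : z ⟨0, by omega⟩ * (∏ k ∈ Finset.univ.erase (⟨0, by omega⟩ : Fin n), z k)
      = ∏ k, z k := Finset.mul_prod_erase Finset.univ z (Finset.mem_univ _)
  simp only [true_or, or_true, if_true] at h
  have hz1 : zc n z 1 = z ⟨0, by omega⟩ := zc_eq' n z 1 (by omega) (by omega)
  rw [hz1]
  linear_combination h + (q * zc n z n * z (⟨0, by omega⟩ : Fin n)) * hmul

lemma spec2 (n : ℕ) (hn : 4 ≤ n) (q : ℂ) (z : Fin n → ℂ)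
    (hE : ∀ j : Fin n, Eqn n q z j = 0) (m : ℕ) (h2 : 2 ≤ m) (hm : m ≤ n - 1) :
    ∃ Q : ℂ, zc n z m * Q = (∏ k, z k) ∧
      (if m = 2 then 1 + zc n z 3 else zc n z (m - 1) + zc n z (m + 1))
          * ((∏ k, z k) - 1) ^ 2
        = q * zc n z 1 ^ 2 * zc n z n * Q := by
  have hmn : m - 1 < n := by omega
  set j : Fin n := ⟨m - 1, hmn⟩ with hj
  refine ⟨∏ k ∈ Finset.univ.erase j, z k, ?_, ?_⟩
  · rw [zc_eq' n z m (by omega) (by omega)]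
    exact Finset.mul_prod_erase Finset.univ z (Finset.mem_univ _)
  · have h := hE j
    unfold Eqn coefA coefB coefC coefβ at h
    have hjv : j.val = m - 1 := rfl
    simp only [hjv] at h
    rw [if_neg (show ¬(m - 1 = 0) from by omega),
      if_neg (show ¬(m - 1 = n - 1) from by omega),
      if_neg (show ¬(m - 1 = 0 ∨ m - 1 = n - 1) from by omega),
      if_pos (show m - 1 + 1 ∈ Finset.Icc 2 (n - 1) from by rw [Finset.mem_Icc]; omega)] at h
    by_cases hm2 : m = 2
    · rw [if_pos hm2]
      subst hm2
      rw [if_pos rfl, if_neg (show ¬((1:ℕ) ∈ Finset.Icc 2 (n - 1)) from by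
        rw [Finset.mem_Icc]; omega)] at h
      norm_num at h ⊢
      linear_combination h
    · rw [if_neg hm2]
      rw [if_neg (show ¬(m - 1 = 1) from by omega),
        if_pos (show m - 1 ∈ Finset.Icc 2 (n - 1) from by rw [Finset.mem_Icc]; omega)] at h
      have hm11 : m - 1 + 2 = m + 1 := by omega
      rw [hm11] at h
      linear_combination h

lemma specn (n : ℕ) (hn : 4 ≤ n) (q : ℂ) (z : Fin n → ℂ)
    (hE : ∀ j : Fin n, Eqn n q z j = 0) :
    ∃ Q : ℂ, zc n z n * Q = (∏ k, z k) ∧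
      q * zc n z 1 ^ 2 * ((∏ k, z k) - 1) + zc n z (n - 1) * ((∏ k, z k) - 1) ^ 2
        = q * zc n z 1 ^ 2 * zc n z n * Q := by
  have hmn : n - 1 < n := by omega
  set j : Fin n := ⟨n - 1, hmn⟩ with hj
  refine ⟨∏ k ∈ Finset.univ.erase j, z k, ?_, ?_⟩
  · rw [zc_eq' n z n (by omega) (by omega)]
    exact Finset.mul_prod_erase Finset.univ z (Finset.mem_univ _)
  · have h := hE j
    unfold Eqn coefA coefB coefC coefβ at h
    have hjv : j.val = n - 1 := rfl
    simp only [hjv] at h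
    simp only [true_or, or_true, if_true] at h
    rw [if_neg (show ¬(n - 1 = 0) from by omega),
      if_neg (show ¬(n - 1 = 1) from by omega),
      if_neg (show ¬(n - 1 + 1 ∈ Finset.Icc 2 (n - 1)) from by rw [Finset.mem_Icc]; omega),
      if_pos (show n - 1 ∈ Finset.Icc 2 (n - 1) from by rw [Finset.mem_Icc]; omega)] at h
    have hzn : z j = zc n z n := (zc_eq' n z n (by omega) (by omega)).symm
    rw [hzn] at h
    linear_combination h


lemma zc_val (n : ℕ) (z : Fin n → ℂ) (j : Fin n) : zc n z (j.val + 1) = z j := by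
  have hlt := j.isLt
  rw [zc_eq' n z (j.val + 1) (by omega) (by omega)]
  simp only [Nat.add_sub_cancel]

lemma zero_case (n : ℕ) (hn : 4 ≤ n) (hev : Even n) (q : ℂ) (z : Fin n → ℂ)
    (hE : ∀ j : Fin n, Eqn n q z j = 0) (hP0 : (∏ k, z k) = 0)
    (hA : q * zc n z 1 ^ 2 * zc n z n = 0) :
    (∀ i : ℕ, 1 ≤ i → i ≤ n / 2 - 1 → zc n z (2 * i + 1) = (-1 : ℂ) ^ i) ∧
    zc n z (n - 1) = q * zc n z 1 ^ 2 ∧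
    (zc n z n = 0 → ∀ i : ℕ, 1 ≤ i → i ≤ n / 2 → zc n z (2 * i) = 0) := by
  have hn2 : n % 2 = 0 := Nat.even_iff.mp hev
  have hD2 : ((∏ k, z k) - 1) ^ 2 = 1 := by rw [hP0]; norm_num
  have hrec : ∀ m, 3 ≤ m → m ≤ n - 1 → zc n z (m + 1) = - zc n z (m - 1) := by
    intro m h3 hm
    obtain ⟨Q, hQ, hEq⟩ := spec2 n hn q z hE m (by omega) hm
    rw [if_neg (show ¬(m = 2) from by omega), hD2, hA] at hEq
    linear_combination hEq
  have hw3 : zc n z 3 = -1 := by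
    obtain ⟨Q, hQ, hEq⟩ := spec2 n hn q z hE 2 (by omega) (by omega)
    rw [if_pos rfl, hD2, hA] at hEq
    linear_combination hEq
  have hodd : ∀ i : ℕ, 1 ≤ i → i ≤ n / 2 - 1 → zc n z (2 * i + 1) = (-1 : ℂ) ^ i := by
    intro i h1
    induction i, h1 using Nat.le_induction with
    | base =>
      intro _
      norm_num [hw3]
    | succ i h1 ih =>
      intro hi
      have e := hrec (2 * i + 2) (by omega) (by omega)
      rw [show 2 * i + 2 + 1 = 2 * (i + 1) + 1 from by ring,
        show 2 * i + 2 - 1 = 2 * i + 1 from by omega] at e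
      rw [e, ih (by omega), pow_succ]
      ring
  refine ⟨hodd, ?_, ?_⟩
  · obtain ⟨Q, hQ, hEq⟩ := specn n hn q z hE
    rw [hP0, hA] at hEq
    linear_combination hEq
  · intro hwn i h1 hi
    have hdown : ∀ i : ℕ, i ≤ n / 2 - 1 → zc n z (n - 2 * i) = 0 := by
      intro i
      induction i with
      | zero =>
        intro _
        simpa using hwn
      | succ i ih =>
        intro hi2
        have e := hrec (n - 2 * i - 1) (by omega) (by omega)
        rw [show n - 2 * i - 1 + 1 = n - 2 * i from by omega,
          show n - 2 * i - 1 - 1 = n - 2 * (i + 1) from by omega] at e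
        have h0 := ih (by omega)
        linear_combination e - h0
    have h := hdown (n / 2 - i) (by omega)
    rw [show n - 2 * (n / 2 - i) = 2 * i from by omega] at h
    exact h

lemma classify (n : ℕ) (hn : 4 ≤ n) (hev : Even n) (q : ℂ) (hq : q ≠ 0) (z : Fin n → ℂ)
    (hP : (∏ k, z k) ≠ 1) (hE : ∀ j : Fin n, Eqn n q z j = 0) :
    (∃ ε ζ : ℂ, q * ε ^ 2 = 1 ∧ ε * ζ ^ (n / 2) = 2 ∧ z = sol1 n ε ζ) ∨
    (∃ ε : ℂ, q * ε ^ 2 = (-1 : ℂ) ^ ((n - 2) / 2) ∧ z = sol2 n ε) := by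
  have hn2 : n % 2 = 0 := Nat.even_iff.mp hev
  by_cases h1 : zc n z 1 = 0
  · -- z₁ = 0 : impossible
    exfalso
    have hP0 : (∏ k, z k) = 0 := by
      apply Finset.prod_eq_zero (Finset.mem_univ (⟨0, by omega⟩ : Fin n))
      rw [← zc_eq' n z 1 (by omega) (by omega)]
      exact h1
    have hA : q * zc n z 1 ^ 2 * zc n z n = 0 := by rw [h1]; ring
    obtain ⟨hodd, hn1, _⟩ := zero_case n hn hev q z hE hP0 hA
    have h2 := hodd (n / 2 - 1) (by omega) (by omega)
    rw [show 2 * (n / 2 - 1) + 1 = n - 1 from by omega] at h2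
    rw [h1] at hn1
    simp only [hn1] at h2
    have : ((-1 : ℂ)) ^ (n / 2 - 1) ≠ 0 := pow_ne_zero _ (by norm_num)
    exact this (by rw [← h2]; ring)
  · by_cases hzn : zc n z n = 0
    · -- z_n = 0 : V(I₂) family
      right
      have hP0 : (∏ k, z k) = 0 := by
        apply Finset.prod_eq_zero (Finset.mem_univ (⟨n - 1, by omega⟩ : Fin n))
        rw [← zc_eq' n z n (by omega) (by omega)]
        exact hzn
      have hA : q * zc n z 1 ^ 2 * zc n z n = 0 := by rw [hzn]; ring
      obtain ⟨hodd, hn1, heven⟩ := zero_case n hn hev q z hE hP0 hA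
      refine ⟨zc n z 1, ?_, ?_⟩
      · have h2 := hodd (n / 2 - 1) (by omega) (by omega)
        rw [show 2 * (n / 2 - 1) + 1 = n - 1 from by omega] at h2
        rw [show (n - 2) / 2 = n / 2 - 1 from by omega]
        rw [← h2, hn1]
      · funext j
        unfold sol2
        by_cases hj0 : j.val = 0
        · rw [if_pos hj0]
          have : j = ⟨0, by omega⟩ := by ext; exact hj0
          rw [this, ← zc_eq' n z 1 (by omega) (by omega)]
        · rw [if_neg hj0]
          have hlt := j.isLt
          rw [← zc_val n z j]
          by_cases hpar : j.val % 2 = 0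
          · rw [if_pos hpar]
            have h := hodd (j.val / 2) (by omega) (by omega)
            rw [show 2 * (j.val / 2) + 1 = j.val + 1 from by omega] at h
            exact h
          · rw [if_neg hpar]
            have h := heven hzn ((j.val + 1) / 2) (by omega) (by omega)
            rw [show 2 * ((j.val + 1) / 2) = j.val + 1 from by omega] at h
            exact h
    · -- main case : P = 2, V(I₁) family
      left
      have hP2 : (∏ k, z k) = 2 := by
        have h := spec1 n hn q z hE
        have hne : q * zc n z 1 * zc n z n ≠ 0 :=
          mul_ne_zero (mul_ne_zero hq h1) hzn
        exact sub_eq_zero.mp ((mul_eq_zero.mp h).resolve_left hne)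
      have hD : ((∏ k, z k) - 1) = 1 := by rw [hP2]; ring
      set A := q * zc n z 1 ^ 2 * zc n z n with hAdef
      have hA0 : A ≠ 0 := by
        apply mul_ne_zero (mul_ne_zero hq (pow_ne_zero 2 h1)) hzn
      -- multiplied equations
      have hmul : ∀ m, 2 ≤ m → m ≤ n - 1 →
          (if m = 2 then 1 + zc n z 3 else zc n z (m - 1) + zc n z (m + 1)) * zc n z m
            = 2 * A := by
        intro m h2 hm
        obtain ⟨Q, hQ, hEq⟩ := spec2 n hn q z hE m h2 hm
        rw [hD] at hEq
        rw [hP2] at hQ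
        calc (if m = 2 then 1 + zc n z 3 else zc n z (m - 1) + zc n z (m + 1)) * zc n z m
            = ((if m = 2 then 1 + zc n z 3 else zc n z (m - 1) + zc n z (m + 1)) * 1 ^ 2)
              * zc n z m := by ring
          _ = A * (zc n z m * Q) := by rw [hEq]; ring
          _ = 2 * A := by rw [hQ]; ring
      have hnz : ∀ m, 2 ≤ m → m ≤ n - 1 → zc n z m ≠ 0 := by
        intro m h2 hm hc
        obtain ⟨Q, hQ, _⟩ := spec2 n hn q z hE m h2 hm
        rw [hP2] at hQ
        rw [hc, zero_mul] at hQ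
        exact two_ne_zero hQ.symm
      have htn : zc n z (n - 1) * zc n z n = A := by
        obtain ⟨Q, hQ, hEq⟩ := specn n hn q z hE
        rw [hD] at hEq
        rw [hP2] at hQ
        have h5 : (q * zc n z 1 ^ 2 * 1 + zc n z (n - 1) * 1 ^ 2) * zc n z n
            = A * (zc n z n * Q) := by rw [hEq]; ring
        rw [hQ] at h5
        linear_combination h5 + zc n z n * hAdef
      -- chain : zc m * zc (m+1) = A for 2 ≤ m ≤ n-1
      have hchain : ∀ d : ℕ, d ≤ n - 3 → zc n z (n - 1 - d) * zc n z (n - 1 - d + 1) = A := by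
        intro d
        induction d with
        | zero =>
          intro _
          rw [show n - 1 - 0 = n - 1 from by omega, show n - 1 + 1 = n from by omega]
          exact htn
        | succ d ih =>
          intro hd
          have hih := ih (by omega)
          have h := hmul (n - 1 - d) (by omega) (by omega)
          rw [if_neg (show ¬(n - 1 - d = 2) from by omega)] at h
          rw [show n - 1 - d - 1 = n - 1 - (d + 1) from by omega] at h
          rw [show n - 1 - (d + 1) + 1 = n - 1 - d from by omega]
          rw [show n - 1 - d + 1 = n - d from by omega] at hih h
          linear_combination h - hih
      have hchain' : ∀ m, 2 ≤ m → m ≤ n - 1 → zc n z m * zc n z (m + 1) = A := by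
        intro m h2 hm
        have := hchain (n - 1 - m) (by omega)
        rw [show n - 1 - (n - 1 - m) = m from by omega] at this
        exact this
      have hw2 : zc n z 2 = A := by
        have h := hmul 2 (by omega) (by omega)
        rw [if_pos rfl] at h
        have h23 := hchain' 2 (by omega) (by omega)
        norm_num at h23
        linear_combination h - h23
      have hval : ∀ m, 2 ≤ m → m ≤ n → zc n z m = (if m % 2 = 0 then A else 1) := by
        intro m h2
        induction m, h2 using Nat.le_induction with
        | base => intro _; norm_num [hw2]
        | succ m h2 ih =>
          intro hm
          have hih := ih (by omega)
          have hc := hchain' m (by omega) (by omega)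
          rw [hih] at hc
          by_cases hpar : m % 2 = 0
          · rw [if_pos hpar] at hc
            rw [if_neg (show ¬((m + 1) % 2 = 0) from by omega)]
            exact mul_left_cancel₀ hA0 (by rw [hc]; ring)
          · rw [if_neg hpar] at hc
            rw [if_pos (show (m + 1) % 2 = 0 from by omega)]
            linear_combination hc
      -- q ε² = 1
      have hwn : zc n z n = A := by
        have := hval n (by omega) le_rfl
        rw [if_pos hn2] at this
        exact this
      have hqe : q * zc n z 1 ^ 2 = 1 := by
        have : A = q * zc n z 1 ^ 2 * A := by
          conv_lhs => rw [hAdef, hwn]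
        have h2 : (q * zc n z 1 ^ 2 - 1) * A = 0 := by linear_combination -this
        rcases mul_eq_zero.mp h2 with h3 | h3
        · linear_combination h3
        · exact absurd h3 hA0
      have hfun : z = sol1 n (zc n z 1) A := by
        funext j
        unfold sol1
        by_cases hj0 : j.val = 0
        · rw [if_pos hj0]
          have : j = ⟨0, by omega⟩ := by ext; exact hj0
          rw [this, ← zc_eq' n z 1 (by omega) (by omega)]
        · rw [if_neg hj0]
          have hlt := j.isLt
          rw [← zc_val n z j]
          have hv := hval (j.val + 1) (by omega) hlt
          by_cases hpar : j.val % 2 = 0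
          · rw [if_pos hpar]
            rw [if_neg (show ¬((j.val + 1) % 2 = 0) from by omega)] at hv
            exact hv
          · rw [if_neg hpar]
            rw [if_pos (show (j.val + 1) % 2 = 0 from by omega)] at hv
            exact hv
      refine ⟨zc n z 1, A, hqe, ?_, hfun⟩
      rw [← prod_sol1 n (by omega) hev (zc n z 1) A, ← hfun]
      exact hP2

lemma zc_sol1 (n : ℕ) (ε ζ : ℂ) (m : ℕ) (h1 : 1 ≤ m) (h2 : m ≤ n) :
    zc n (sol1 n ε ζ) m = if m = 1 then ε else if m % 2 = 1 then 1 else ζ := by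
  rw [zc_eq' n _ m h1 h2]
  unfold sol1
  by_cases hm1 : m = 1
  · rw [if_pos (show m - 1 = 0 from by omega), if_pos hm1]
  · rw [if_neg (show ¬(m - 1 = 0) from by omega), if_neg hm1]
    by_cases hp : m % 2 = 1
    · rw [if_pos (show (m - 1) % 2 = 0 from by omega), if_pos hp]
    · rw [if_neg (show ¬((m - 1) % 2 = 0) from by omega), if_neg hp]

lemma zc_sol2 (n : ℕ) (ε : ℂ) (m : ℕ) (h1 : 1 ≤ m) (h2 : m ≤ n) :
    zc n (sol2 n ε) m
      = if m = 1 then ε else if m % 2 = 1 then (-1 : ℂ) ^ ((m - 1) / 2) else 0 := by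
  rw [zc_eq' n _ m h1 h2]
  unfold sol2
  by_cases hm1 : m = 1
  · rw [if_pos (show m - 1 = 0 from by omega), if_pos hm1]
  · rw [if_neg (show ¬(m - 1 = 0) from by omega), if_neg hm1]
    by_cases hp : m % 2 = 1
    · rw [if_pos (show (m - 1) % 2 = 0 from by omega), if_pos hp]
    · rw [if_neg (show ¬((m - 1) % 2 = 0) from by omega), if_neg hp]

lemma sol2_crit (n : ℕ) (hn : 4 ≤ n) (hev : Even n) (q : ℂ) (ε : ℂ)
    (hε : q * ε ^ 2 = (-1 : ℂ) ^ ((n - 2) / 2)) :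
    (∏ k, sol2 n ε k) ≠ 1 ∧ ∀ j : Fin n, Eqn n q (sol2 n ε) j = 0 := by
  have hn2 : n % 2 = 0 := Nat.even_iff.mp hev
  set z := sol2 n ε with hzdef
  have hP0 : (∏ k, z k) = 0 := prod_sol2 n (by omega) ε
  refine ⟨by rw [hP0]; exact zero_ne_one, ?_⟩
  intro j
  have hQ0 : (∏ k ∈ Finset.univ.erase j, z k) = 0 := by
    by_cases hj : j = ⟨1, by omega⟩
    · apply Finset.prod_eq_zero (i := (⟨3, by omega⟩ : Fin n))
      · rw [Finset.mem_erase, hj]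
        exact ⟨Fin.ne_of_val_ne (by norm_num), Finset.mem_univ _⟩
      · show sol2 n ε ⟨3, by omega⟩ = 0
        unfold sol2
        norm_num
    · apply Finset.prod_eq_zero (i := (⟨1, by omega⟩ : Fin n))
      · rw [Finset.mem_erase]
        exact ⟨fun hc => hj hc.symm, Finset.mem_univ _⟩
      · show sol2 n ε ⟨1, by omega⟩ = 0
        unfold sol2
        norm_num
  have hzn : zc n z n = 0 := by
    rw [zc_sol2 n ε n (by omega) (by omega), if_neg (by omega), if_neg (by omega)]
  have hz1 : zc n z 1 = ε := by
    rw [zc_sol2 n ε 1 (by omega) (by omega), if_pos rfl]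
  have hlt := j.isLt
  unfold Eqn coefA coefB coefC coefβ
  rw [hP0, hQ0, hzn]
  by_cases hj0 : j.val = 0
  · rw [if_pos hj0, if_neg (show ¬(j.val = n - 1) from by omega),
      if_neg (show ¬(j.val = 1) from by omega),
      if_neg (show ¬(j.val + 1 ∈ Finset.Icc 2 (n - 1)) from by rw [Finset.mem_Icc]; omega),
      if_neg (show ¬(j.val ∈ Finset.Icc 2 (n - 1)) from by rw [Finset.mem_Icc]; omega)]
    ring
  · by_cases hj1 : j.val = 1
    · have h3 : zc n z 3 = -1 := by
        rw [zc_sol2 n ε 3 (by omega) (by omega), if_neg (by omega), if_pos (by omega)]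
        norm_num
      rw [if_neg hj0, if_neg (show ¬(j.val = n - 1) from by omega), if_pos hj1,
        if_pos (show j.val + 1 ∈ Finset.Icc 2 (n - 1) from by rw [Finset.mem_Icc]; omega),
        if_neg (show ¬(j.val ∈ Finset.Icc 2 (n - 1)) from by rw [Finset.mem_Icc]; omega),
        hj1]
      norm_num [h3]
    · by_cases hjn : j.val = n - 1
      · have hn1 : zc n z (n - 1) = (-1 : ℂ) ^ ((n - 2) / 2) := by
          rw [zc_sol2 n ε (n - 1) (by omega) (by omega), if_neg (by omega),
            if_pos (by omega), show (n - 1 - 1) / 2 = (n - 2) / 2 from by omega]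
        rw [if_neg hj0, if_pos hjn, if_neg (show ¬(j.val = 1) from by omega),
          if_neg (show ¬(j.val + 1 ∈ Finset.Icc 2 (n - 1)) from by rw [Finset.mem_Icc]; omega),
          if_pos (show j.val ∈ Finset.Icc 2 (n - 1) from by rw [Finset.mem_Icc]; omega),
          hjn, hn1, hz1]
        linear_combination -hε
      · -- middle case
        have hmid : zc n z (j.val) + zc n z (j.val + 2) = 0 := by
          rw [zc_sol2 n ε j.val (by omega) (by omega),
            zc_sol2 n ε (j.val + 2) (by omega) (by omega),
            if_neg (show ¬(j.val = 1) from hj1), if_neg (show ¬(j.val + 2 = 1) from by omega)]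
          by_cases hp : j.val % 2 = 1
          · rw [if_pos hp, if_pos (show (j.val + 2) % 2 = 1 from by omega),
              show (j.val + 2 - 1) / 2 = (j.val - 1) / 2 + 1 from by omega, pow_succ]
            ring
          · rw [if_neg hp, if_neg (show ¬((j.val + 2) % 2 = 1) from by omega)]
            ring
        rw [if_neg hj0, if_neg hjn, if_neg hj1,
          if_pos (show j.val + 1 ∈ Finset.Icc 2 (n - 1) from by rw [Finset.mem_Icc]; omega),
          if_pos (show j.val ∈ Finset.Icc 2 (n - 1) from by rw [Finset.mem_Icc]; omega)]
        linear_combination hmid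

lemma sol1_crit (n : ℕ) (hn : 4 ≤ n) (hev : Even n) (q : ℂ) (hq : q ≠ 0) (ε ζ : ℂ)
    (h1 : q * ε ^ 2 = 1) (h2 : ε * ζ ^ (n / 2) = 2) :
    (∏ k, sol1 n ε ζ k) ≠ 1 ∧ ∀ j : Fin n, Eqn n q (sol1 n ε ζ) j = 0 := by
  have hn2 : n % 2 = 0 := Nat.even_iff.mp hev
  set z := sol1 n ε ζ with hzdef
  have hε0 : ε ≠ 0 := by
    intro hc
    rw [hc] at h1
    norm_num at h1
  have hζ0 : ζ ≠ 0 := by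
    intro hc
    rw [hc, zero_pow (show n / 2 ≠ 0 from by omega)] at h2
    norm_num at h2
  have hP2 : (∏ k, z k) = 2 := by rw [hzdef, prod_sol1 n (by omega) hev, h2]
  refine ⟨by rw [hP2]; norm_num, ?_⟩
  have hz1 : zc n z 1 = ε := by
    rw [hzdef, zc_sol1 n ε ζ 1 (by omega) (by omega), if_pos rfl]
  have hzn : zc n z n = ζ := by
    rw [hzdef, zc_sol1 n ε ζ n (by omega) (by omega), if_neg (by omega), if_neg (by omega)]
  have hznz : ∀ j : Fin n, z j ≠ 0 := by
    intro j
    have hlt := j.isLt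
    rw [← zc_val n z j, hzdef, zc_sol1 n ε ζ (j.val + 1) (by omega) (by omega)]
    split_ifs
    · exact hε0
    · exact one_ne_zero
    · exact hζ0
  intro j
  have hlt := j.isLt
  have hQ2 : z j * (∏ k ∈ Finset.univ.erase j, z k) = 2 := by
    rw [Finset.mul_prod_erase Finset.univ z (Finset.mem_univ j), hP2]
  set Q := ∏ k ∈ Finset.univ.erase j, z k with hQdef
  suffices hs : z j * Eqn n q z j = 0 by
    rcases mul_eq_zero.mp hs with h | h
    · exact absurd h (hznz j)
    · exact h
  unfold Eqn coefA coefB coefC coefβ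
  rw [← hQdef, hP2, hz1, hzn]
  by_cases hj0 : j.val = 0
  · have hzj : z j = ε := by
      rw [← zc_val n z j, hj0, hzdef, zc_sol1 n ε ζ 1 (by omega) (by omega), if_pos rfl]
    rw [if_pos hj0, if_neg (show ¬(j.val = n - 1) from by omega),
      if_pos (Or.inl hj0), if_neg (show ¬(j.val = 1) from by omega),
      if_neg (show ¬(j.val + 1 ∈ Finset.Icc 2 (n - 1)) from by rw [Finset.mem_Icc]; omega),
      if_neg (show ¬(j.val ∈ Finset.Icc 2 (n - 1)) from by rw [Finset.mem_Icc]; omega),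
      hzj]
    rw [hzj] at hQ2
    linear_combination (-(q * ζ * ε ^ 2)) * hQ2
  · by_cases hj1 : j.val = 1
    · have hzj : z j = ζ := by
        rw [← zc_val n z j, hj1, hzdef, zc_sol1 n ε ζ 2 (by omega) (by omega),
          if_neg (by omega), if_neg (by omega)]
      have h3 : zc n z 3 = 1 := by
        rw [hzdef, zc_sol1 n ε ζ 3 (by omega) (by omega), if_neg (by omega), if_pos (by omega)]
      rw [if_neg hj0, if_neg (show ¬(j.val = n - 1) from by omega),
        if_neg (show ¬(j.val = 0 ∨ j.val = n - 1) from by omega), if_pos hj1,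
        if_pos (show j.val + 1 ∈ Finset.Icc 2 (n - 1) from by rw [Finset.mem_Icc]; omega),
        if_neg (show ¬(j.val ∈ Finset.Icc 2 (n - 1)) from by rw [Finset.mem_Icc]; omega),
        hj1, h3, hzj]
      rw [hzj] at hQ2
      linear_combination (-(q * ε ^ 2 * ζ)) * hQ2 + (-(2 * ζ)) * h1
    · by_cases hjn : j.val = n - 1
      · have hzj : z j = ζ := by
          rw [← zc_val n z j, show j.val + 1 = n from by omega, hzn]
        have hn1 : zc n z (n - 1) = 1 := by
          rw [hzdef, zc_sol1 n ε ζ (n - 1) (by omega) (by omega), if_neg (by omega),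
            if_pos (by omega)]
        rw [if_neg hj0, if_pos hjn, if_pos (Or.inr hjn),
          if_neg (show ¬(j.val = 1) from by omega),
          if_neg (show ¬(j.val + 1 ∈ Finset.Icc 2 (n - 1)) from by rw [Finset.mem_Icc]; omega),
          if_pos (show j.val ∈ Finset.Icc 2 (n - 1) from by rw [Finset.mem_Icc]; omega),
          hjn, hn1, hzj]
        rw [hzj] at hQ2
        linear_combination (-(q * ε ^ 2 * ζ)) * hQ2 + (-ζ) * h1
      · -- middle
        rw [if_neg hj0, if_neg hjn,
          if_neg (show ¬(j.val = 0 ∨ j.val = n - 1) from by omega),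
          if_neg (show ¬(j.val = 1) from hj1),
          if_pos (show j.val + 1 ∈ Finset.Icc 2 (n - 1) from by rw [Finset.mem_Icc]; omega),
          if_pos (show j.val ∈ Finset.Icc 2 (n - 1) from by rw [Finset.mem_Icc]; omega)]
        by_cases hp : j.val % 2 = 0
        · have hzj : z j = 1 := by
            rw [← zc_val n z j, hzdef, zc_sol1 n ε ζ (j.val + 1) (by omega) (by omega),
              if_neg (by omega), if_pos (by omega)]
          have ha : zc n z j.val = ζ := by
            rw [hzdef, zc_sol1 n ε ζ j.val (by omega) (by omega), if_neg (by omega),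
              if_neg (by omega)]
          have hb : zc n z (j.val + 2) = ζ := by
            rw [hzdef, zc_sol1 n ε ζ (j.val + 2) (by omega) (by omega), if_neg (by omega),
              if_neg (by omega)]
          rw [ha, hb, hzj]
          rw [hzj] at hQ2
          linear_combination (-(q * ε ^ 2 * ζ)) * hQ2 + (-(2 * ζ)) * h1
        · have hzj : z j = ζ := by
            rw [← zc_val n z j, hzdef, zc_sol1 n ε ζ (j.val + 1) (by omega) (by omega),
              if_neg (by omega), if_neg (by omega)]
          have ha : zc n z j.val = 1 := by
            rw [hzdef, zc_sol1 n ε ζ j.val (by omega) (by omega), if_neg (by omega),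
              if_pos (by omega)]
          have hb : zc n z (j.val + 2) = 1 := by
            rw [hzdef, zc_sol1 n ε ζ (j.val + 2) (by omega) (by omega), if_neg (by omega),
              if_pos (by omega)]
          rw [ha, hb, hzj]
          rw [hzj] at hQ2
          linear_combination (-(q * ε ^ 2 * ζ)) * hQ2 + (-(2 * ζ)) * h1

/-- **Count of critical points of the mirror LG potential of the quadric.**
For even `n ≥ 4` and `q ≠ 0`, the set of critical points of `W₀` in `Zⁿ` is finite with
exactly `n + 2` elements: `n` of them in `V(I₁)` and `2` of them in `V(I₂)`. -/
theorem quadric_mirror_critical_count (n : ℕ) (hn : 4 ≤ n) (hev : Even n)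
    (q : ℂ) (hq : q ≠ 0) :
    {z : Fin n → ℂ | IsCritPt n q z}.Finite ∧
    {z : Fin n → ℂ | IsCritPt n q z}.ncard = n + 2 ∧
    {z : Fin n → ℂ | IsCritPt n q z ∧ MemV1 n q z}.ncard = n ∧
    {z : Fin n → ℂ | IsCritPt n q z ∧ MemV2 n q z}.ncard = 2 := by
  have hn2 : n % 2 = 0 := Nat.even_iff.mp hev
  set R1 : Set ℂ := {ζ : ℂ | ζ ^ n = 4 * q} with hR1
  set R2 : Set ℂ := {ε : ℂ | q * ε ^ 2 = (-1 : ℂ) ^ ((n - 2) / 2)} with hR2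
  set f1 : ℂ → (Fin n → ℂ) := fun ζ => sol1 n (2 / ζ ^ (n / 2)) ζ with hf1
  set S1 : Set (Fin n → ℂ) := f1 '' R1 with hS1
  set S2 : Set (Fin n → ℂ) := (sol2 n) '' R2 with hS2
  -- root-set facts
  have h4q : (4 : ℂ) * q ≠ 0 := mul_ne_zero (by norm_num) hq
  have hR1fin : R1.Finite ∧ R1.ncard = n := card_pow_eq n (by omega) (4 * q) h4q
  have hR2eq : R2 = {ε : ℂ | ε ^ 2 = (-1 : ℂ) ^ ((n - 2) / 2) / q} := by
    ext ε
    simp only [hR2, Set.mem_setOf_eq, eq_div_iff hq]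
    constructor
    · intro h; linear_combination h
    · intro h; linear_combination h
  have hR2fin : R2.Finite ∧ R2.ncard = 2 := by
    rw [hR2eq]
    exact card_pow_eq 2 (by norm_num) _
      (div_ne_zero (pow_ne_zero _ (by norm_num)) hq)
  -- basic properties of members of R1
  have hRζ : ∀ ζ ∈ R1, ζ ≠ 0 ∧ ζ ^ (n / 2) ≠ 0 ∧
      q * (2 / ζ ^ (n / 2)) ^ 2 = 1 ∧ (2 / ζ ^ (n / 2)) * ζ ^ (n / 2) = 2 := by
    intro ζ hζ
    have hζn : ζ ^ n = 4 * q := hζ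
    have hζ0 : ζ ≠ 0 := by
      intro hc
      rw [hc, zero_pow (show n ≠ 0 from by omega)] at hζn
      exact h4q hζn.symm
    have hp : ζ ^ (n / 2) ≠ 0 := pow_ne_zero _ hζ0
    have hpow : (ζ ^ (n / 2)) ^ 2 = 4 * q := by
      rw [← pow_mul, show n / 2 * 2 = n from by omega]
      exact hζn
    refine ⟨hζ0, hp, ?_, ?_⟩
    · rw [div_pow, hpow]
      field_simp
      ring
    · field_simp
  -- S1, S2 are sets of critical points
  have hS1crit : ∀ x ∈ S1, IsCritPt n q x := by
    rintro x ⟨ζ, hζ, rfl⟩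
    obtain ⟨-, -, hc1, hc2⟩ := hRζ ζ hζ
    exact (crit_iff n hn q _).mpr (sol1_crit n hn hev q hq _ ζ hc1 hc2)
  have hS2crit : ∀ x ∈ S2, IsCritPt n q x := by
    rintro x ⟨ε, hε, rfl⟩
    exact (crit_iff n hn q _).mpr (sol2_crit n hn hev q ε hε)
  -- the critical set equals S1 ∪ S2
  have hcrit_eq : {z : Fin n → ℂ | IsCritPt n q z} = S1 ∪ S2 := by
    apply Set.Subset.antisymm
    · intro z hz
      obtain ⟨hP, hE⟩ := (crit_iff n hn q z).mp hz
      rcases classify n hn hev q hq z hP hE with ⟨ε, ζ, h1, h2, rfl⟩ | ⟨ε, h1, rfl⟩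
      · left
        have hζ0 : ζ ≠ 0 := by
          intro hc
          rw [hc, zero_pow (show n / 2 ≠ 0 from by omega), mul_zero] at h2
          norm_num at h2
        have hp : ζ ^ (n / 2) ≠ 0 := pow_ne_zero _ hζ0
        have hεval : ε = 2 / ζ ^ (n / 2) := by
          field_simp
          linear_combination h2
        refine ⟨ζ, ?_, ?_⟩
        · show ζ ^ n = 4 * q
          have hqε : q * ε ^ 2 = 1 := h1
          rw [hεval] at hqε
          have : ζ ^ n = (ζ ^ (n / 2)) ^ 2 := by
            rw [← pow_mul, show n / 2 * 2 = n from by omega]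
          rw [this]
          field_simp at hqε
          linear_combination -hqε
        · show f1 ζ = sol1 n ε ζ
          simp only [hf1]
          rw [← hεval]
      · right
        exact ⟨ε, h1, rfl⟩
    · intro z hz
      rcases hz with h | h
      · exact hS1crit z h
      · exact hS2crit z h
  -- injectivity and cardinalities
  have hinj1 : Set.InjOn f1 R1 := by
    intro a ha b hb hab
    have h := congrFun hab ⟨1, by omega⟩
    simpa [hf1, sol1] using h
  have hinj2 : Set.InjOn (sol2 n) R2 := by
    intro a ha b hb hab
    have h := congrFun hab ⟨0, by omega⟩
    simpa [sol2] using h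
  have hS1card : S1.ncard = n := by
    rw [hS1, Set.ncard_image_of_injOn hinj1, hR1fin.2]
  have hS2card : S2.ncard = 2 := by
    rw [hS2, Set.ncard_image_of_injOn hinj2, hR2fin.2]
  have hS1fin : S1.Finite := hR1fin.1.image _
  have hS2fin : S2.Finite := hR2fin.1.image _
  -- disjointness
  have hdisj : Disjoint S1 S2 := by
    rw [Set.disjoint_left]
    rintro x ⟨ζ, hζ, rfl⟩ ⟨ε, hε, hx⟩
    have h1 := congrFun hx ⟨1, by omega⟩
    simp only [f1, sol1, sol2] at h1
    norm_num at h1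
    exact (hRζ ζ hζ).1 h1.symm
  -- MemV1 / MemV2 facts
  have hS1V1 : ∀ x ∈ S1, MemV1 n q x := by
    rintro x ⟨ζ, hζ, rfl⟩
    obtain ⟨hζ0, hp, hc1, hc2⟩ := hRζ ζ hζ
    refine ⟨?_, ?_, ?_, ?_⟩
    · intro i h1 hi
      rw [zc_sol1 n _ ζ (2 * i + 1) (by omega) (by omega), if_neg (by omega),
        if_pos (by omega)]
    · intro i h1 hi
      rw [zc_sol1 n _ ζ (2 * i) (by omega) (by omega), if_neg (by omega),
        if_neg (by omega), zc_sol1 n _ ζ n (by omega) (by omega), if_neg (by omega),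
        if_neg (by omega)]
    · rw [zc_sol1 n _ ζ 1 (by omega) (by omega), if_pos rfl]
      exact hc1
    · rw [zc_sol1 n _ ζ 1 (by omega) (by omega), if_pos rfl,
        zc_sol1 n _ ζ n (by omega) (by omega), if_neg (by omega), if_neg (by omega)]
      exact hc2
  have hS2V2 : ∀ x ∈ S2, MemV2 n q x := by
    rintro x ⟨ε, hε, rfl⟩
    refine ⟨?_, ?_, ?_⟩
    · intro i h1 hi
      rw [zc_sol2 n _ (2 * i + 1) (by omega) (by omega), if_neg (by omega),
        if_pos (by omega), show (2 * i + 1 - 1) / 2 = i from by omega]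
    · intro i h1 hi
      rw [zc_sol2 n _ (2 * i) (by omega) (by omega), if_neg (by omega),
        if_neg (by omega)]
    · rw [zc_sol2 n _ 1 (by omega) (by omega), if_pos rfl]
      exact hε
  have hS1notV2 : ∀ x ∈ S1, ¬ MemV2 n q x := by
    rintro x ⟨ζ, hζ, rfl⟩ hmem
    have h := hmem.2.1 1 (by omega) (by omega)
    rw [zc_sol1 n _ ζ 2 (by omega) (by omega), if_neg (by omega), if_neg (by omega)] at h
    exact (hRζ ζ hζ).1 h
  have hS2notV1 : ∀ x ∈ S2, ¬ MemV1 n q x := by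
    rintro x ⟨ε, hε, rfl⟩ hmem
    have h := hmem.2.2.2
    rw [zc_sol2 n _ n (by omega) (by omega), if_neg (by omega), if_neg (by omega),
      zero_pow (show n / 2 ≠ 0 from by omega), mul_zero] at h
    norm_num at h
  -- assemble
  have hV1set : {z : Fin n → ℂ | IsCritPt n q z ∧ MemV1 n q z} = S1 := by
    apply Set.Subset.antisymm
    · rintro z ⟨hc, hm⟩
      have h' : z ∈ S1 ∪ S2 := by rw [← hcrit_eq]; exact hc
      rcases h' with h | h
      · exact h
      · exact absurd hm (hS2notV1 z h)
    · intro z hz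
      exact ⟨hS1crit z hz, hS1V1 z hz⟩
  have hV2set : {z : Fin n → ℂ | IsCritPt n q z ∧ MemV2 n q z} = S2 := by
    apply Set.Subset.antisymm
    · rintro z ⟨hc, hm⟩
      have h' : z ∈ S1 ∪ S2 := by rw [← hcrit_eq]; exact hc
      rcases h' with h | h
      · exact absurd hm (hS1notV2 z h)
      · exact h
    · intro z hz
      exact ⟨hS2crit z hz, hS2V2 z hz⟩
  refine ⟨?_, ?_, ?_, ?_⟩
  · rw [hcrit_eq]
    exact hS1fin.union hS2fin
  · rw [hcrit_eq, Set.ncard_union_eq hdisj hS1fin hS2fin, hS1card, hS2card]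
  · rw [hV1set, hS1card]
  · rw [hV2set, hS2card]
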